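/- Data processing inequality with respect to the conditioning system: let p⁰_{X|G} be a conditional PMF, r¹_X,…,r^d_X PMFs independent of G, p_G a PMF on G, T a stochastic operator from G to H with q_H = T(p_G), and define q⁰_{X|H}(x|h) = ∑_g (p_G(g)/q_H(h)) t(h|g) p⁰_{X|G}(x|g). Then, with α₀ = maxₖ αₖ and β = α₀, D_{α,α₀}(p⁰_{X|G}, r¹_X,…,r^d_X | p_G) ≥ D_{α,α₀}(q⁰_{X|H}, r¹_X,…,r^d_X | q_H). -/

import Mathlib

open Finset

lemma exists_pos_of_sum_one {G : Type*} [Fintype G] (w : G → ℝ)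
    (hw : ∀ g, 0 ≤ w g) (h1 : ∑ g, w g = 1) : ∃ g, 0 < w g := by
  by_contra hcon
  push_neg at hcon
  have h0 : ∑ g, w g = 0 :=
    le_antisymm (Finset.sum_nonpos fun g _ => hcon g)
      (Finset.sum_nonneg fun g _ => hw g)
  rw [h1] at h0; norm_num at h0

lemma norm_mix_core {X G : Type*} [Fintype X] [Fintype G] [Nonempty X] {p : ℝ} (hp : 0 < p)
    (c : X → ℝ) (hc : ∀ x, 0 < c x)
    (w : G → ℝ) (hw : ∀ g, 0 ≤ w g) (hw1 : ∑ g, w g = 1)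
    (v : G → X → ℝ) (hv : ∀ g x, 0 < v g x) :
    (1 ≤ p → (∑ x, (∑ g, w g * v g x) ^ p * c x) ^ (1/p) ≤
      ∑ g, w g * (∑ x, (v g x) ^ p * c x) ^ (1/p)) ∧
    (p ≤ 1 → ∑ g, w g * (∑ x, (v g x) ^ p * c x) ^ (1/p) ≤
      (∑ x, (∑ g, w g * v g x) ^ p * c x) ^ (1/p)) := by
  set N : G → ℝ := fun g => (∑ x, (v g x) ^ p * c x) ^ (1/p) with hN
  have hSpos : ∀ g, 0 < ∑ x, (v g x) ^ p * c x := fun g =>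
    Finset.sum_pos (fun x _ => mul_pos (Real.rpow_pos_of_pos (hv g x) p) (hc x))
      Finset.univ_nonempty
  have hNpos : ∀ g, 0 < N g := fun g => Real.rpow_pos_of_pos (hSpos g) _
  have hNp : ∀ g, (N g) ^ p = ∑ x, (v g x) ^ p * c x := fun g => by
    rw [hN, one_div, Real.rpow_inv_rpow (hSpos g).le hp.ne']
  set T : ℝ := ∑ g, w g * N g with hT
  have hTpos : 0 < T := by
    obtain ⟨g, hg⟩ := exists_pos_of_sum_one w hw hw1
    exact Finset.sum_pos' (fun g _ => mul_nonneg (hw g) (hNpos g).le)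
      ⟨g, Finset.mem_univ g, mul_pos hg (hNpos g)⟩
  set lam : G → ℝ := fun g => w g * N g / T with hlam
  have hlam_nonneg : ∀ g, 0 ≤ lam g := fun g =>
    div_nonneg (mul_nonneg (hw g) (hNpos g).le) hTpos.le
  have hlam_sum : ∑ g, lam g = 1 := by
    simp only [hlam, ← Finset.sum_div, ← hT]
    exact div_self hTpos.ne'
  have hu_nonneg : ∀ g x, 0 ≤ v g x / N g := fun g x =>
    div_nonneg (hv g x).le (hNpos g).le
  have hkey : ∀ x, ∑ g, w g * v g x = T * ∑ g, lam g * (v g x / N g) := by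
    intro x
    rw [Finset.mul_sum]
    refine Finset.sum_congr rfl fun g _ => ?_
    simp only [hlam]
    have hb : T ≠ 0 := hTpos.ne'
    have hn : N g ≠ 0 := (hNpos g).ne'
    field_simp
  have hmix : ∀ g, ∑ x, (v g x / N g) ^ p * c x = 1 := by
    intro g
    have heq : ∀ x, (v g x / N g) ^ p * c x = ((v g x) ^ p * c x) / (N g) ^ p := fun x => by
      rw [Real.div_rpow (hv g x).le (hNpos g).le]; ring
    rw [Finset.sum_congr rfl fun x _ => heq x, ← Finset.sum_div, ← hNp g,
      div_self (Real.rpow_pos_of_pos (hNpos g) p).ne']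
  have hswap : ∑ x, (∑ g, lam g * (v g x / N g) ^ p) * c x = 1 := by
    calc ∑ x, (∑ g, lam g * (v g x / N g) ^ p) * c x
        = ∑ x, ∑ g, lam g * ((v g x / N g) ^ p * c x) := by
          refine Finset.sum_congr rfl fun x _ => ?_
          rw [Finset.sum_mul]
          exact Finset.sum_congr rfl fun g _ => by ring
      _ = ∑ g, lam g * ∑ x, (v g x / N g) ^ p * c x := by
          rw [Finset.sum_comm]
          exact Finset.sum_congr rfl fun g _ => (Finset.mul_sum _ _ _).symm
      _ = ∑ g, lam g := by
          refine Finset.sum_congr rfl fun g _ => ?_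
          rw [hmix g, mul_one]
      _ = 1 := hlam_sum
  have hrw : ∀ x, (∑ g, w g * v g x) ^ p * c x
      = T ^ p * ((∑ g, lam g * (v g x / N g)) ^ p * c x) := by
    intro x
    rw [hkey x, Real.mul_rpow hTpos.le
      (Finset.sum_nonneg fun g _ => mul_nonneg (hlam_nonneg g) (hu_nonneg g x))]
    ring
  constructor
  · intro hp1
    have hsum_le : ∑ x, (∑ g, w g * v g x) ^ p * c x ≤ T ^ p := by
      calc ∑ x, (∑ g, w g * v g x) ^ p * c x
          = ∑ x, T ^ p * ((∑ g, lam g * (v g x / N g)) ^ p * c x) :=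
            Finset.sum_congr rfl fun x _ => hrw x
        _ ≤ ∑ x, T ^ p * ((∑ g, lam g * (v g x / N g) ^ p) * c x) := by
            refine Finset.sum_le_sum fun x _ => ?_
            have hJ := Real.rpow_arith_mean_le_arith_mean_rpow Finset.univ lam
              (fun g => v g x / N g) (fun g _ => hlam_nonneg g) hlam_sum
              (fun g _ => hu_nonneg g x) hp1
            have hTp : (0:ℝ) ≤ T ^ p := (Real.rpow_pos_of_pos hTpos p).le
            exact mul_le_mul_of_nonneg_left
              (mul_le_mul_of_nonneg_right hJ (hc x).le) hTp
        _ = T ^ p * ∑ x, (∑ g, lam g * (v g x / N g) ^ p) * c x := by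
            rw [Finset.mul_sum]
        _ = T ^ p := by rw [hswap, mul_one]
    calc (∑ x, (∑ g, w g * v g x) ^ p * c x) ^ (1/p)
        ≤ (T ^ p) ^ (1/p) := by
          apply Real.rpow_le_rpow _ hsum_le (by positivity)
          exact Finset.sum_nonneg fun x _ => mul_nonneg
            (Real.rpow_nonneg (Finset.sum_nonneg fun g _ =>
              mul_nonneg (hw g) (hv g x).le) p) (hc x).le
      _ = T := by rw [one_div, Real.rpow_rpow_inv hTpos.le hp.ne']
  · intro hp1
    have hJensen : ∀ x, ∑ g, lam g * (v g x / N g) ^ p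
        ≤ (∑ g, lam g * (v g x / N g)) ^ p := by
      intro x
      have hcc := (Real.concaveOn_rpow hp.le hp1).le_map_sum
        (t := Finset.univ) (w := lam) (p := fun g => v g x / N g)
        (fun g _ => hlam_nonneg g) hlam_sum (fun g _ => hu_nonneg g x)
      simpa [smul_eq_mul] using hcc
    have hsum_ge : T ^ p ≤ ∑ x, (∑ g, w g * v g x) ^ p * c x := by
      calc T ^ p = T ^ p * ∑ x, (∑ g, lam g * (v g x / N g) ^ p) * c x := by
            rw [hswap, mul_one]
        _ = ∑ x, T ^ p * ((∑ g, lam g * (v g x / N g) ^ p) * c x) := by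
            rw [Finset.mul_sum]
        _ ≤ ∑ x, T ^ p * ((∑ g, lam g * (v g x / N g)) ^ p * c x) := by
            refine Finset.sum_le_sum fun x _ => ?_
            exact mul_le_mul_of_nonneg_left
              (mul_le_mul_of_nonneg_right (hJensen x) (hc x).le)
              (Real.rpow_pos_of_pos hTpos p).le
        _ = ∑ x, (∑ g, w g * v g x) ^ p * c x :=
            Finset.sum_congr rfl fun x _ => (hrw x).symm
    calc T = (T ^ p) ^ (1/p) := by rw [one_div, Real.rpow_rpow_inv hTpos.le hp.ne']
      _ ≤ (∑ x, (∑ g, w g * v g x) ^ p * c x) ^ (1/p) :=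
          Real.rpow_le_rpow (Real.rpow_pos_of_pos hTpos p).le hsum_ge (by positivity)



/-- Data processing inequality for the conditional multivariate Rényi
divergence with respect to the conditioning system (Proposition `l:l2`):
when the PMFs `r k` are independent of `G`, `α 0` is the maximal order and
`β = α 0`, postprocessing the side information `G ↦ H` via a stochastic
operator `t` (using its pseudo-inverse to define `q0`) does not increase
the divergence. -/
theorem conditional_multivariate_renyi_dpi_conditioning
    {X G H : Type*} [Fintype X] [Fintype G] [Fintype H]
    [Nonempty X] [Nonempty G] [Nonempty H] (d : ℕ)
    (pG : G → ℝ) (p0 : X → G → ℝ) (r : Fin d → X → ℝ)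
    (α : Fin (d + 1) → ℝ)
    (t : H → G → ℝ)
    (hpG_pos : ∀ g, 0 < pG g) (hpG_sum : ∑ g, pG g = 1)
    (hp0_pos : ∀ x g, 0 < p0 x g) (hp0_sum : ∀ g, ∑ x, p0 x g = 1)
    (hr_pos : ∀ k x, 0 < r k x) (hr_sum : ∀ k, ∑ x, r k x = 1)
    (ht_nonneg : ∀ h g, 0 ≤ t h g) (ht_sum : ∀ g, ∑ h, t h g = 1)
    (hqH_pos : ∀ h, 0 < ∑ g, t h g * pG g)
    (hα_sum : ∑ k, α k = 1)
    (hα_cond : (∀ k, 0 ≤ α k) ∨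
      (1 < α 0 ∧ ∀ k : Fin d, α k.succ ≤ 0))
    (hα0_max : ∀ k, α k ≤ α 0) (hα0_ne : α 0 ≠ 1) :
    (α 0 / (α 0 - 1)) * Real.log
        (∑ h, (∑ g, t h g * pG g) *
          (∑ x, ((∑ g, (pG g / (∑ g', t h g' * pG g')) * t h g * p0 x g) ^ (α 0) *
            ∏ k : Fin d, (r k x) ^ (α k.succ))) ^ (1 / α 0)) ≤
      (α 0 / (α 0 - 1)) * Real.log
        (∑ g, pG g *
          (∑ x, ((p0 x g) ^ (α 0) * ∏ k : Fin d, (r k x) ^ (α k.succ))) ^ (1 / α 0)) := by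
  set p : ℝ := α 0 with hpdef
  -- positivity of p
  have hp : 0 < p := by
    have h1 : (1:ℝ) ≤ (d + 1 : ℝ) * p := by
      have := Finset.sum_le_sum (fun k (_ : k ∈ Finset.univ) => hα0_max k)
      rw [hα_sum] at this
      simpa [Finset.sum_const, Finset.card_univ, mul_comm] using this
    nlinarith [Nat.cast_nonneg (α := ℝ) d]
  set c : X → ℝ := fun x => ∏ k : Fin d, (r k x) ^ (α k.succ) with hcdef
  have hc : ∀ x, 0 < c x := fun x =>
    Finset.prod_pos fun k _ => Real.rpow_pos_of_pos (hr_pos k x) _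
  set qH : H → ℝ := fun h => ∑ g, t h g * pG g with hqHdef
  have hq : ∀ h, 0 < qH h := hqH_pos
  set w : H → G → ℝ := fun h g => pG g / qH h * t h g with hwdef
  have hw_nonneg : ∀ h g, 0 ≤ w h g := fun h g =>
    mul_nonneg (div_nonneg (hpG_pos g).le (hq h).le) (ht_nonneg h g)
  have hw_sum : ∀ h, ∑ g, w h g = 1 := by
    intro h
    have : ∀ g, w h g = (t h g * pG g) / qH h := fun g => by
      simp only [hwdef]; ring
    rw [Finset.sum_congr rfl fun g _ => this g, ← Finset.sum_div]
    exact div_self (hq h).ne'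
  set N : G → ℝ := fun g => (∑ x, (p0 x g) ^ p * c x) ^ (1/p) with hNdef
  have hNpos : ∀ g, 0 < N g := fun g => Real.rpow_pos_of_pos
    (Finset.sum_pos (fun x _ => mul_pos (Real.rpow_pos_of_pos (hp0_pos x g) p) (hc x))
      Finset.univ_nonempty) _
  set M : H → ℝ := fun h => (∑ x, (∑ g, w h g * p0 x g) ^ p * c x) ^ (1/p) with hMdef
  have hMpos : ∀ h, 0 < M h := by
    intro h
    obtain ⟨g, hg⟩ := exists_pos_of_sum_one (w h) (hw_nonneg h) (hw_sum h)
    refine Real.rpow_pos_of_pos (Finset.sum_pos (fun x _ => mul_pos ?_ (hc x))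
      Finset.univ_nonempty) _
    refine Real.rpow_pos_of_pos (Finset.sum_pos' (fun g' _ =>
      mul_nonneg (hw_nonneg h g') (hp0_pos x g').le)
      ⟨g, Finset.mem_univ g, mul_pos hg (hp0_pos x g)⟩) _
  -- the statement's sums equal these
  have hLHS : (∑ h, (∑ g, t h g * pG g) *
          (∑ x, ((∑ g, (pG g / (∑ g', t h g' * pG g')) * t h g * p0 x g) ^ (α 0) *
            ∏ k : Fin d, (r k x) ^ (α k.succ))) ^ (1 / α 0))
      = ∑ h, qH h * M h := rfl
  have hRHS : (∑ g, pG g *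
          (∑ x, ((p0 x g) ^ (α 0) * ∏ k : Fin d, (r k x) ^ (α k.succ))) ^ (1 / α 0))
      = ∑ g, pG g * N g := rfl
  rw [hLHS, hRHS]
  -- the bridge: sum over h of qH h * (mixture of N) equals sum over g of pG g * N g
  have hbridge : ∑ h, qH h * ∑ g, w h g * N g = ∑ g, pG g * N g := by
    calc ∑ h, qH h * ∑ g, w h g * N g
        = ∑ h, ∑ g, pG g * t h g * N g := by
          refine Finset.sum_congr rfl fun h _ => ?_
          rw [Finset.mul_sum]
          refine Finset.sum_congr rfl fun g _ => ?_
          simp only [hwdef]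
          field_simp
          rw [mul_assoc, mul_assoc, mul_div_cancel_left₀ _ (hq h).ne']
          ring
      _ = ∑ g, (∑ h, t h g) * (pG g * N g) := by
          rw [Finset.sum_comm]
          refine Finset.sum_congr rfl fun g _ => ?_
          rw [Finset.sum_mul]
          exact Finset.sum_congr rfl fun h _ => by ring
      _ = ∑ g, pG g * N g := by
          refine Finset.sum_congr rfl fun g _ => ?_
          rw [ht_sum g, one_mul]
  have hcore := fun h => norm_mix_core hp c hc (w h) (hw_nonneg h) (hw_sum h)
    (fun g x => p0 x g) (fun g x => hp0_pos x g)
  have hMN : ∀ h, (1 ≤ p → M h ≤ ∑ g, w h g * N g) ∧ (p ≤ 1 → ∑ g, w h g * N g ≤ M h) :=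
    fun h => hcore h
  have hsumM_pos : 0 < ∑ h, qH h * M h :=
    Finset.sum_pos (fun h _ => mul_pos (hq h) (hMpos h)) Finset.univ_nonempty
  have hsumN_pos : 0 < ∑ g, pG g * N g :=
    Finset.sum_pos (fun g _ => mul_pos (hpG_pos g) (hNpos g)) Finset.univ_nonempty
  rcases lt_or_gt_of_ne hα0_ne with hplt | hpgt
  · -- p < 1 : factor nonpositive, sums reversed
    have hfac : p / (p - 1) ≤ 0 :=
      div_nonpos_of_nonneg_of_nonpos hp.le (by linarith)
    have hge : ∑ g, pG g * N g ≤ ∑ h, qH h * M h := by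
      rw [← hbridge]
      refine Finset.sum_le_sum fun h _ => ?_
      exact mul_le_mul_of_nonneg_left ((hMN h).2 hplt.le) (hq h).le
    exact mul_le_mul_of_nonpos_left (Real.log_le_log hsumN_pos hge) hfac
  · -- 1 < p : factor nonnegative
    have hfac : 0 ≤ p / (p - 1) := le_of_lt (div_pos hp (by linarith))
    have hle : ∑ h, qH h * M h ≤ ∑ g, pG g * N g := by
      rw [← hbridge]
      refine Finset.sum_le_sum fun h _ => ?_
      exact mul_le_mul_of_nonneg_left ((hMN h).1 hpgt.le) (hq h).le
    exact mul_le_mul_of_nonneg_left (Real.log_le_log hsumM_pos hle) hfac
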